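/- Let R be a commutative Noetherian ring, I an injective R-module, and F a flat R-module. Then the tensor product I ⊗_R F is an injective R-module. -/

import Mathlib

/-!
STATEMENT 1: Let `R` be a commutative Noetherian ring, `I` an injective `R`-module and
`F` a flat `R`-module.  Then `I ⊗[R] F` is an injective `R`-module.
-/

universe u

open TensorProduct LinearMap

/-- Naturality of `rTensorHomToHomRTensor` in the first (contravariant) variable. -/
lemma rTensorHomToHomRTensor_naturality {R : Type u} [CommRing R]
    {I F M N : Type u} [AddCommGroup I] [Module R I] [AddCommGroup F] [Module R F]
    [AddCommGroup M] [Module R M] [AddCommGroup N] [Module R N]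
    (ψ : M →ₗ[R] N) (x : (N →ₗ[R] I) ⊗[R] F) :
    TensorProduct.rTensorHomToHomRTensor (RingHom.id R) M I F ((LinearMap.lcomp R I ψ).rTensor F x) =
      (TensorProduct.rTensorHomToHomRTensor (RingHom.id R) N I F x) ∘ₗ ψ := by
  induction x with
  | zero => simp
  | add a b ha hb =>
      refine LinearMap.ext fun m => ?_
      simp only [map_add, LinearMap.add_apply, LinearMap.add_comp] at *
      rw [ha, hb]
  | tmul g y =>
      refine LinearMap.ext fun m => ?_
      simp [TensorProduct.rTensorHomToHomRTensor_apply]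

/-- The comparison map is bijective when the source module is finite free. -/
lemma rTensorHomToHomRTensor_bijective {R : Type u} [CommRing R]
    {I F M : Type u} [AddCommGroup I] [Module R I] [AddCommGroup F] [Module R F]
    [AddCommGroup M] [Module R M] [Module.Free R M] [Module.Finite R M] :
    Function.Bijective (TensorProduct.rTensorHomToHomRTensor (RingHom.id R) M I F) := by
  have h2 : ⇑(rTensorHomEquivHomRTensor R M I F) =
      ⇑(TensorProduct.rTensorHomToHomRTensor (RingHom.id R) M I F) :=
    funext fun x => rTensorHomEquivHomRTensor_apply x
  exact h2 ▸ (rTensorHomEquivHomRTensor R M I F).bijective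

theorem injective_tensorProduct_flat (R : Type u) [CommRing R] [IsNoetherianRing R]
    (I F : Type u) [AddCommGroup I] [Module R I] [AddCommGroup F] [Module R F]
    (hI : Module.Injective R I) (hF : Module.Flat R F) :
    Module.Injective R (TensorProduct R I F) := by
  apply Module.Baer.injective
  intro J f
  classical
  -- J is finitely generated; take a finite presentation of J
  obtain ⟨n, p, hp⟩ := Module.Finite.exists_fin' R J
  haveI : IsNoetherian R (LinearMap.ker p) := isNoetherian_submodule' _
  obtain ⟨m, q, hq⟩ := Module.Finite.exists_fin' R (LinearMap.ker p)
  set d : (Fin m → R) →ₗ[R] (Fin n → R) := (LinearMap.ker p).subtype ∘ₗ q with hd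
  have hrange : LinearMap.range d = LinearMap.ker p := by
    rw [hd, LinearMap.range_comp, LinearMap.range_eq_top.mpr hq, Submodule.map_top,
      Submodule.range_subtype]
  have hpd : p ∘ₗ d = 0 := by
    refine LinearMap.ext fun y => ?_
    have : d y ∈ LinearMap.ker p := hrange ▸ LinearMap.mem_range_self d y
    simpa using this
  have hΘA := rTensorHomToHomRTensor_bijective (R := R) (I := I) (F := F) (M := Fin n → R)
  have hΘB := rTensorHomToHomRTensor_bijective (R := R) (I := I) (F := F) (M := Fin m → R)
  -- pull back f ∘ p through the comparison map
  obtain ⟨t, ht⟩ := hΘA.surjective (f ∘ₗ p)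
  -- t is killed by (− ∘ d) ⊗ id
  have htd : (LinearMap.lcomp R I d).rTensor F t = 0 := by
    apply hΘB.injective
    rw [map_zero, rTensorHomToHomRTensor_naturality d t, ht,
      LinearMap.comp_assoc, hpd, LinearMap.comp_zero]
  -- exactness of tensoring with the flat module F
  have hexact : Function.Exact
      ((LinearMap.ker (LinearMap.lcomp R I d)).subtype.rTensor F)
      ((LinearMap.lcomp R I d).rTensor F) := by
    apply hF.rTensor_exact
    rw [LinearMap.exact_iff, Submodule.range_subtype]
  obtain ⟨s, hs⟩ := (hexact t).mp htd
  -- the natural map from Hom(R, I) onto the kernel of (− ∘ d)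
  have hσ : ∀ h : R →ₗ[R] I,
      LinearMap.lcomp R I (J.subtype ∘ₗ p) h ∈ LinearMap.ker (LinearMap.lcomp R I d) := by
    intro h
    rw [LinearMap.mem_ker]
    refine LinearMap.ext fun x => ?_
    have h0 : p (d x) = 0 := by simpa using LinearMap.congr_fun hpd x
    simp [LinearMap.lcomp_apply, h0]
  have hρ : Function.Surjective
      ((LinearMap.lcomp R I (J.subtype ∘ₗ p)).codRestrict _ hσ) := by
    rintro ⟨g, hg⟩
    have hgd : g ∘ₗ d = 0 := hg
    have hker : LinearMap.ker p ≤ LinearMap.ker g := by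
      intro x hx
      rw [← hrange] at hx
      obtain ⟨y, rfl⟩ := hx
      exact LinearMap.mem_ker.mpr (by simpa using LinearMap.congr_fun hgd y)
    set pbar : ((Fin n → R) ⧸ LinearMap.ker p) →ₗ[R] J := (LinearMap.ker p).liftQ p le_rfl
      with hpbar
    have hpbarinj : Function.Injective pbar := by
      rw [← LinearMap.ker_eq_bot]
      exact Submodule.ker_liftQ_eq_bot _ _ _ le_rfl
    have hpbarsurj : Function.Surjective pbar := by
      intro j
      obtain ⟨x, hx⟩ := hp j
      exact ⟨Submodule.Quotient.mk x, by rwa [hpbar, Submodule.liftQ_apply]⟩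
    set e := LinearEquiv.ofBijective pbar ⟨hpbarinj, hpbarsurj⟩ with he
    set g' : J →ₗ[R] I := ((LinearMap.ker p).liftQ g hker) ∘ₗ (e.symm : J →ₗ[R] _) with hg'
    have hg'p : ∀ x, g' (p x) = g x := by
      intro x
      have hsymm : e.symm (p x) = Submodule.Quotient.mk x := by
        rw [LinearEquiv.symm_apply_eq]
        show p x = pbar (Submodule.Quotient.mk x)
        rw [hpbar, Submodule.liftQ_apply]
      rw [hg']
      simp only [LinearMap.coe_comp, Function.comp_apply, LinearEquiv.coe_coe, hsymm,
        Submodule.liftQ_apply]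
    obtain ⟨h, hh⟩ := hI.out J.subtype J.injective_subtype g'
    refine ⟨h, ?_⟩
    apply Subtype.ext
    show LinearMap.lcomp R I (J.subtype ∘ₗ p) h = g
    refine LinearMap.ext fun x => ?_
    have h1 : h (J.subtype (p x)) = g' (p x) := hh (p x)
    simp only [LinearMap.lcomp_apply, LinearMap.coe_comp, Function.comp_apply]
    rw [h1, hg'p x]
  -- pull s back to Hom(R, I) ⊗ F
  obtain ⟨u, hu⟩ := LinearMap.rTensor_surjective F hρ s
  refine ⟨TensorProduct.rTensorHomToHomRTensor (RingHom.id R) R I F u, ?_⟩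
  have hσρ : LinearMap.lcomp R I (J.subtype ∘ₗ p) =
      (LinearMap.ker (LinearMap.lcomp R I d)).subtype ∘ₗ
        ((LinearMap.lcomp R I (J.subtype ∘ₗ p)).codRestrict _ hσ) :=
    (LinearMap.subtype_comp_codRestrict _ _ _).symm
  have h1 : (LinearMap.lcomp R I (J.subtype ∘ₗ p)).rTensor F u = t := by
    rw [hσρ, LinearMap.rTensor_comp, LinearMap.comp_apply, hu, hs]
  have key : (TensorProduct.rTensorHomToHomRTensor (RingHom.id R) R I F u) ∘ₗ (J.subtype ∘ₗ p) = f ∘ₗ p := by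
    have h2 := rTensorHomToHomRTensor_naturality (J.subtype ∘ₗ p) u
    rw [h1, ht] at h2
    exact h2.symm
  intro x hx
  obtain ⟨y, hy⟩ := hp ⟨x, hx⟩
  have hkey := LinearMap.congr_fun key y
  simp only [LinearMap.coe_comp, Function.comp_apply, Submodule.coe_subtype] at hkey
  rw [hy] at hkey
  exact hkey
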